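/- arXiv:1411.0433 — 2 statements merged into one kernel-verified Lean document; each statement's English description precedes it below -/
import Mathlib

section
/- If S ⊆ ℝ^d is r-convex (i.e., S = C_r(S)) and 0 < r' < r, then S is r'-convex: S = C_{r'}(S). -/
open Metric Set

/-- The `r`-convex hull of a set. -/
def rConvexHull {d : ℕ} (r : ℝ) (A : Set (EuclideanSpace ℝ (Fin d))) :
    Set (EuclideanSpace ℝ (Fin d)) :=
  ⋂₀ {C | ∃ x, C = (Metric.ball x r)ᶜ ∧ Metric.ball x r ∩ A = ∅}

theorem rConvex_of_smaller_radius
    (d : ℕ) (S : Set (EuclideanSpace ℝ (Fin d))) (r r' : ℝ)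
    (hr' : 0 < r') (hrr : r' < r) (hS : S = rConvexHull r S) :
    S = rConvexHull r' S := by
  apply Set.Subset.antisymm
  · -- S ⊆ rConvexHull r' S : trivial
    intro y hy C hC
    obtain ⟨x, rfl, hx⟩ := hC
    intro hyx
    exact (Set.eq_empty_iff_forall_notMem.mp hx y) ⟨hyx, hy⟩
  · -- rConvexHull r' S ⊆ S
    intro y hy
    rw [hS]
    intro C hC
    obtain ⟨x, rfl, hx⟩ := hC
    intro hyx
    have hxS : ∀ z, z ∈ Metric.ball x r → z ∉ S :=
      fun z hz hzS => Set.eq_empty_iff_forall_notMem.mp hx z ⟨hz, hzS⟩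
    have hD : dist y x < r := Metric.mem_ball.mp hyx
    -- find c with dist y c < r' and ball c r' ⊆ ball x r
    have key : ∃ c : EuclideanSpace ℝ (Fin d),
        dist y c < r' ∧ dist c x ≤ r - r' := by
      by_cases hcase : dist y x ≤ r - r'
      · exact ⟨y, by simpa using hr', by simpa using hcase⟩
      · push_neg at hcase
        have hDpos : 0 < dist y x := lt_trans (by linarith) hcase
        refine ⟨x + ((r - r') / dist y x) • (y - x), ?_, ?_⟩
        · have h1 : y - (x + ((r - r') / dist y x) • (y - x))
              = (1 - (r - r') / dist y x) • (y - x) := by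
            rw [sub_smul, one_smul]; abel
          rw [dist_eq_norm, h1, norm_smul]
          have h2 : ‖y - x‖ = dist y x := (dist_eq_norm y x).symm
          rw [h2]
          have h3 : (0:ℝ) ≤ 1 - (r - r') / dist y x := by
            rw [sub_nonneg, div_le_one hDpos]; linarith
          rw [Real.norm_of_nonneg h3]
          have : (1 - (r - r') / dist y x) * dist y x = dist y x - (r - r') := by
            field_simp
          rw [this]; linarith
        · have h1 : x + ((r - r') / dist y x) • (y - x) - x
              = ((r - r') / dist y x) • (y - x) := by abel
          rw [dist_eq_norm, h1, norm_smul]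
          have h2 : ‖y - x‖ = dist y x := (dist_eq_norm y x).symm
          rw [h2, Real.norm_of_nonneg (div_nonneg (by linarith) hDpos.le)]
          rw [div_mul_cancel₀ _ (ne_of_gt hDpos)]
    obtain ⟨c, hyc, hcx⟩ := key
    have hsub : Metric.ball c r' ∩ S = ∅ := by
      rw [Set.eq_empty_iff_forall_notMem]
      rintro z ⟨hz, hzS⟩
      refine hxS z (Metric.mem_ball.mpr ?_) hzS
      calc dist z x ≤ dist z c + dist c x := dist_triangle z c x
        _ < r' + (r - r') := add_lt_add_of_lt_of_le (Metric.mem_ball.mp hz) hcx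
        _ = r := by ring
    have := hy (Metric.ball c r')ᶜ ⟨c, rfl, hsub⟩
    exact this (Metric.mem_ball.mpr hyc)
end

section
/- Fix constants K > 0, α > 0, β > 0, and d ≥ 1, and define a_n = (Kα/3 · n/(log n)²)^{1/d} for n ≥ 2. Then lim_{n→∞} (1/log n) · [ log(a_n^d) − n K α / ( a_n^d · log(K^{−1} β a_n^d) ) ] = −2. -/
open Filter Real

theorem borel_cantelli_rate_limit
    (K α β : ℝ) (hK : 0 < K) (hα : 0 < α) (hβ : 0 < β)
    (d : ℕ) (hd : 1 ≤ d)
    (a : ℕ → ℝ)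
    (ha : ∀ n : ℕ, a n = (K * α / 3 * (n / (Real.log n) ^ 2)) ^ ((1 : ℝ) / d)) :
    Tendsto
      (fun n : ℕ =>
        (1 / Real.log n) *
          (Real.log ((a n) ^ (d : ℕ)) -
            n * K * α / ((a n) ^ (d : ℕ) * Real.log (K⁻¹ * β * (a n) ^ (d : ℕ)))))
      atTop (nhds (-2)) := by
  set c : ℝ := K * α / 3 with hc_def
  have hc : 0 < c := by positivity
  have hKα : K * α = 3 * c := by rw [hc_def]; ring
  have hlog : Tendsto (fun n : ℕ => Real.log n) atTop atTop :=
    Real.tendsto_log_atTop.comp tendsto_natCast_atTop_atTop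
  have hinv : Tendsto (fun n : ℕ => (Real.log n)⁻¹) atTop (nhds 0) :=
    hlog.inv_tendsto_atTop
  have hll : Tendsto (fun n : ℕ => Real.log (Real.log n) / Real.log n) atTop (nhds 0) :=
    ((Real.isLittleO_log_id_atTop).tendsto_div_nhds_zero).comp hlog
  set L : ℕ → ℝ := fun n => Real.log (K⁻¹ * β * c) + Real.log n - 2 * Real.log (Real.log n)
    with hL_def
  have hLdiv : Tendsto (fun n : ℕ => L n / Real.log n) atTop (nhds 1) := by
    have hev : ∀ᶠ n : ℕ in atTop, L n / Real.log n
        = Real.log (K⁻¹ * β * c) * (Real.log n)⁻¹ + 1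
          - 2 * (Real.log (Real.log n) / Real.log n) := by
      filter_upwards [hlog.eventually_gt_atTop 0] with n hn
      have h0 : Real.log n ≠ 0 := ne_of_gt hn
      field_simp [hL_def]
      show Real.log (K⁻¹ * β * c) + _ - _ = _
      rw [show K⁻¹ * β * c = β * c / K by ring]
    rw [tendsto_congr' hev]
    have h := ((hinv.const_mul (Real.log (K⁻¹ * β * c))).add
      (tendsto_const_nhds (x := (1:ℝ)))).sub (hll.const_mul 2)
    simpa using h
  have hg : Tendsto (fun n : ℕ => Real.log c * (Real.log n)⁻¹ + 1
      - 2 * (Real.log (Real.log n) / Real.log n) - 3 * (Real.log n / L n))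
      atTop (nhds (-2)) := by
    have h := (((hinv.const_mul (Real.log c)).add
      (tendsto_const_nhds (x := (1:ℝ)))).sub (hll.const_mul 2)).sub
      ((hLdiv.inv₀ one_ne_zero).const_mul 3)
    norm_num at h
    convert h using 2
  refine Tendsto.congr' ?_ hg
  have hLpos : ∀ᶠ n : ℕ in atTop, 0 < L n := by
    filter_upwards [hLdiv.eventually (eventually_gt_nhds (by norm_num : (1:ℝ)/2 < 1)),
      hlog.eventually_gt_atTop 0] with n h1 h2
    have h3 : 0 < L n / Real.log n := lt_trans (by norm_num) h1
    have h4 := mul_pos h3 h2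
    rwa [div_mul_cancel₀ _ (ne_of_gt h2)] at h4
  have hdR : (0:ℝ) < (d:ℝ) := by exact_mod_cast Nat.lt_of_lt_of_le Nat.zero_lt_one hd
  filter_upwards [hLpos, hlog.eventually_gt_atTop 0, eventually_gt_atTop 0] with n hL hln hn
  have hnR : (0:ℝ) < (n:ℝ) := by exact_mod_cast hn
  have hlne : Real.log n ≠ 0 := ne_of_gt hln
  -- a n ^ d = c * (n / (log n)^2)
  have hx : (0:ℝ) ≤ c * ((n:ℝ) / (Real.log n) ^ 2) := by positivity
  have hA : (a n) ^ (d:ℕ) = c * ((n:ℝ) / (Real.log n) ^ 2) := by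
    rw [ha n, ← Real.rpow_natCast (_ ^ ((1:ℝ)/d)) d, ← Real.rpow_mul hx,
      one_div, inv_mul_cancel₀ (ne_of_gt hdR), Real.rpow_one]
  have hxpos : (0:ℝ) < c * ((n:ℝ) / (Real.log n) ^ 2) := by positivity
  have hfrac : (n:ℝ) / (Real.log n) ^ 2 ≠ 0 := by positivity
  have hlogA : Real.log ((a n) ^ (d:ℕ))
      = Real.log c + Real.log n - 2 * Real.log (Real.log n) := by
    rw [hA, Real.log_mul (ne_of_gt hc) hfrac, Real.log_div (ne_of_gt hnR)
      (by positivity), Real.log_pow]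
    push_cast
    ring
  have hlogB : Real.log (K⁻¹ * β * ((a n) ^ (d:ℕ))) = L n := by
    have : K⁻¹ * β * ((a n) ^ (d:ℕ)) = (K⁻¹ * β * c) * ((n:ℝ) / (Real.log n) ^ 2) := by
      rw [hA]; ring
    rw [this, Real.log_mul (by positivity) hfrac, Real.log_div (ne_of_gt hnR)
      (by positivity), Real.log_pow, hL_def]
    push_cast
    ring
  rw [hlogA, hlogB, hA]
  have hLne : L n ≠ 0 := ne_of_gt hL
  have h3 : (n:ℝ) * K * α = (n:ℝ) * (3 * c) := by rw [mul_assoc, hKα]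
  rw [h3]
  field_simp
end
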